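/- Let M be a matroid with ground set E, let x ∈ E be an element that is neither a loop nor a free element (coloop) of M, let N = M \ x (deletion) and M' = M / x (contraction) on ground set E \ {x}. Fix a weight function w : E \ {x} → ℝ_{≥0} and a linear order on E \ {x}. If the greedy algorithm (processing elements in order, accepting an element iff it keeps the current selection independent) is run with respect to N and with respect to M', then the set selected under N contains the set selected under M'. -/

import Mathlib

open Classical in
private lemma greedy_aux_12 {α : Type*} (M : Matroid α) (x : α) :
    ∀ (l : List α), (∀ a ∈ l, a ∈ M.E) → x ∉ l →
    ∀ (T S : Finset α), x ∉ T → M.Indep (insert x ↑T) → M.Indep (↑S) →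
      T ⊆ S → (S : Set α) ⊆ M.closure (insert x ↑T) →
    l.foldl (fun (S : Finset α) a =>
        if ((fun (S : Finset α) => x ∉ S ∧ M.Indep (insert x (↑S : Set α))) (insert a S))
        then insert a S else S) T ⊆
    l.foldl (fun (S : Finset α) a =>
        if ((fun (S : Finset α) => M.Indep (↑S : Set α)) (insert a S)) then insert a S else S) S := by
  intro l
  induction l with
  | nil => intro _ _ T S _ _ _ hTS _; simpa using hTS
  | cons a l ih =>
    intro hlE hxl T S hxT hTindep hSindep hTS hcl
    have haE : a ∈ M.E := hlE a (List.mem_cons_self (a := a) (l := l))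
    have hax : a ≠ x := fun h => hxl (h ▸ List.mem_cons_self (a := a) (l := l))
    have hlE' : ∀ b ∈ l, b ∈ M.E := fun b hb => hlE b (List.mem_cons_of_mem a hb)
    have hxl' : x ∉ l := fun h => hxl (List.mem_cons_of_mem a h)
    simp only [List.foldl_cons]
    by_cases hc : x ∉ insert a T ∧ M.Indep (insert x (↑(insert a T) : Set α))
    · -- contraction accepts a
      rw [if_pos hc]
      have hins : (↑(insert a T) : Set α) = insert a ↑T := by simp
      have hcomm : insert x (insert a (↑T : Set α)) = insert a (insert x ↑T) :=
        Set.insert_comm x a _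
      have hTa : M.Indep (insert a (insert x (↑T : Set α))) := by
        rw [← hcomm, ← hins]; exact hc.2
      -- deletion also accepts a
      have hSa : M.Indep (insert a (↑S : Set α)) := by
        by_cases haS : a ∈ S
        · simpa [Set.insert_eq_of_mem (Finset.mem_coe.mpr haS)] using hSindep
        · have haT : a ∉ (insert x (↑T : Set α)) := by
            intro h
            rcases h with h | h
            · exact hax h
            · exact haS (hTS (Finset.mem_coe.mp h))
          have hacl : a ∉ M.closure (insert x (↑T : Set α)) := by
            intro h
            have := (hTindep.insert_indep_iff).mp hTa
            rcases this with ⟨_, h2⟩ | h2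
            · exact h2 h
            · exact haT h2
          have hclS : M.closure (↑S : Set α) ⊆ M.closure (insert x ↑T) :=
            M.closure_subset_closure_of_subset_closure hcl
          have haclS : a ∉ M.closure (↑S : Set α) := fun h => hacl (hclS h)
          exact (hSindep.insert_indep_iff).mpr (Or.inl ⟨haE, haclS⟩)
      rw [if_pos (by simpa using hSa)]
      have hsub : insert x (↑T : Set α) ⊆ insert x (↑(insert a T) : Set α) := by
        rw [hins]; exact Set.insert_subset_insert (Set.subset_insert _ _)
      have hground : insert x (↑(insert a T) : Set α) ⊆ M.E := hc.2.subset_ground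
      have hselfcl : insert x (↑(insert a T) : Set α) ⊆
          M.closure (insert x (↑(insert a T) : Set α)) := M.subset_closure _ hground
      refine ih hlE' hxl' (insert a T) (insert a S) hc.1 hc.2
        (by simpa using hSa) (Finset.insert_subset_insert a hTS) ?_
      intro b hb
      rcases Finset.mem_insert.mp (by simpa using hb) with rfl | hbS
      · exact hselfcl (by rw [hins]; exact Or.inr (Or.inl rfl))
      · exact (M.closure_subset_closure hsub) (hcl (Finset.mem_coe.mpr hbS))
    · -- contraction rejects a
      rw [if_neg hc]
      have hxaT : x ∉ insert a T := by
        simp only [Finset.mem_insert]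
        rintro (h | h)
        · exact hax h.symm
        · exact hxT h
      have hnotind : ¬ M.Indep (insert x (↑(insert a T) : Set α)) := fun h => hc ⟨hxaT, h⟩
      have hins : (↑(insert a T) : Set α) = insert a ↑T := by simp
      have hacl : a ∈ M.closure (insert x (↑T : Set α)) := by
        by_cases haT : a ∈ (insert x (↑T : Set α))
        · exact M.subset_closure _ hTindep.subset_ground haT
        · by_contra h
          exact hnotind (by
            rw [hins, Set.insert_comm]
            exact (hTindep.insert_indep_iff).mpr (Or.inl ⟨haE, h⟩))
      by_cases hd : M.Indep (↑(insert a S) : Set α)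
      · rw [if_pos hd]
        refine ih hlE' hxl' T (insert a S) hxT hTindep hd
          (hTS.trans (Finset.subset_insert a S)) ?_
        intro b hb
        rcases Finset.mem_insert.mp (by simpa using hb) with rfl | hbS
        · exact hacl
        · exact hcl (Finset.mem_coe.mpr hbS)
      · rw [if_neg hd]
        exact ih hlE' hxl' T S hxT hTindep hSindep hTS hcl

open Classical in
/-- Greedy monotonicity under contraction vs deletion.  Let `x` be neither a loop nor a
coloop of the matroid `M`, and fix an ordering (a duplicate-free list `l` avoiding `x`) of
the remaining elements together with nonnegative weights.  Running the greedy algorithm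
(accept an element iff it keeps the selection independent) with respect to the deletion
`M \ x` (independence: independent in `M`) and with respect to the contraction `M / x`
(independence: the set together with `x` is independent in `M`), the set selected under
the deletion contains the set selected under the contraction. -/
theorem stmt_12 {α : Type*} (M : Matroid α) (x : α) (hxE : x ∈ M.E)
    (hnotloop : M.Indep {x}) (hnotcoloop : ∃ B : Set α, M.IsBase B ∧ x ∉ B)
    (w : α → ℝ) (hw : ∀ a, 0 ≤ w a)
    (l : List α) (hnd : l.Nodup) (hxl : x ∉ l) (hlE : ∀ a ∈ l, a ∈ M.E)
    (greedy : (Finset α → Prop) → List α → Finset α)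
    (hgreedy : ∀ (P : Finset α → Prop) (L : List α),
      greedy P L = L.foldl (fun S a => if P (insert a S) then insert a S else S) ∅) :
    greedy (fun S => x ∉ S ∧ M.Indep (insert x ↑S)) l
      ⊆ greedy (fun S => M.Indep ↑S) l := by
  rw [hgreedy, hgreedy]
  have := greedy_aux_12 M x l hlE hxl ∅ ∅ (by simp)
    (by simpa using hnotloop) (by simp [M.empty_indep]) (le_refl _) (by simp)
  simpa using this
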